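/- Let ε>0 and for ξ > ε let K = √(ξ²−ε²). Then for every n ≥ 1 and j ≥ 0, the j-th derivative of ξ ↦ (K−ξ)^n on (2ε, ∞) satisfies |d^j/dξ^j (K−ξ)^n| ≤ C_{n,j,ε} ξ^{−(n+j)} for ξ ≥ 2ε. -/

import Mathlib

open Real

namespace Stmt15

noncomputable def S (ε ξ : ℝ) : ℝ := Real.sqrt (ξ ^ 2 - ε ^ 2)
noncomputable def H (ε ξ : ℝ) : ℝ := S ε ξ - ξ

abbrev Term := ℝ × ℕ × ℕ × ℕ

noncomputable def evalT (ε : ℝ) (t : Term) (ξ : ℝ) : ℝ :=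
  t.1 * ξ ^ t.2.1 * ((S ε ξ)⁻¹) ^ t.2.2.1 * (H ε ξ) ^ t.2.2.2

def dT (t : Term) : List Term :=
  [(t.1 * t.2.1, t.2.1 - 1, if t.2.1 = 0 then t.2.2.1 + 1 else t.2.2.1, t.2.2.2),
   (-(t.1 * t.2.2.1), t.2.1 + 1, t.2.2.1 + 2, t.2.2.2),
   (-(t.1 * t.2.2.2), t.2.1, t.2.2.1 + 1, t.2.2.2)]

variable {ε ξ : ℝ}

lemma hS2 (hε : 0 < ε) (hξ : ε < ξ) : (S ε ξ) ^ 2 = ξ ^ 2 - ε ^ 2 := by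
  have : 0 ≤ ξ ^ 2 - ε ^ 2 := by nlinarith
  simpa [S] using Real.sq_sqrt this

lemma hSpos (hε : 0 < ε) (hξ : ε < ξ) : 0 < S ε ξ := by
  apply Real.sqrt_pos.2; nlinarith

lemma hasDerivAt_S (hε : 0 < ε) (hξ : ε < ξ) :
    HasDerivAt (S ε) (ξ / S ε ξ) ξ := by
  have h1 : HasDerivAt (fun ξ : ℝ => ξ ^ 2 - ε ^ 2) (2 * ξ) ξ := by
    simpa using (hasDerivAt_pow 2 ξ).sub_const (ε ^ 2)
  have hne : ξ ^ 2 - ε ^ 2 ≠ 0 := by nlinarith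
  have := h1.sqrt hne
  refine this.congr_deriv ?_
  have hspos := hSpos hε hξ
  unfold S at *
  rw [mul_div_mul_left _ _ (two_ne_zero)]

lemma hasDerivAt_H (hε : 0 < ε) (hξ : ε < ξ) :
    HasDerivAt (H ε) (-(H ε ξ) * (S ε ξ)⁻¹) ξ := by
  have := (hasDerivAt_S hε hξ).sub (hasDerivAt_id ξ)
  refine this.congr_deriv ?_
  have hs := (hSpos hε hξ).ne'
  field_simp [H]
  simp only [H]; ring

lemma hasDerivAt_invS_pow (hε : 0 < ε) (hξ : ε < ξ) (b : ℕ) :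
    HasDerivAt (fun ξ => ((S ε ξ)⁻¹) ^ b) (-(b : ℝ) * ξ * ((S ε ξ)⁻¹) ^ (b + 2)) ξ := by
  have hs := (hSpos hε hξ).ne'
  have hinv : HasDerivAt (fun ξ => (S ε ξ)⁻¹) (-(ξ / S ε ξ) / (S ε ξ) ^ 2) ξ :=
    (hasDerivAt_S hε hξ).inv hs
  have := hinv.pow b
  refine this.congr_deriv ?_
  cases b with
  | zero => simp
  | succ k =>
    push_cast
    field_simp
    have h3 : S ε ξ ^ 3 * (1 / S ε ξ) ^ 3 = 1 := by rw [← mul_pow, mul_one_div_cancel hs, one_pow]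
    linear_combination ((1 / S ε ξ) ^ k * ξ) * h3

lemma hasDerivAt_H_pow (hε : 0 < ε) (hξ : ε < ξ) (m : ℕ) :
    HasDerivAt (fun ξ => (H ε ξ) ^ m) (-(m : ℝ) * (S ε ξ)⁻¹ * (H ε ξ) ^ m) ξ := by
  have := (hasDerivAt_H hε hξ).pow m
  refine this.congr_deriv ?_
  cases m with
  | zero => simp
  | succ k =>
    push_cast
    rw [pow_succ]
    ring

lemma hasDerivAt_evalT (hε : 0 < ε) (hξ : ε < ξ) (t : Term) :
    HasDerivAt (fun ξ => evalT ε t ξ) (((dT t).map (fun u => evalT ε u ξ)).sum) ξ := by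
  obtain ⟨c, a, b, m⟩ := t
  have h1 := (((hasDerivAt_pow a ξ).mul (hasDerivAt_invS_pow hε hξ b)).mul
      (hasDerivAt_H_pow hε hξ m)).const_mul c
  have hfun : (fun ξ => evalT ε (c, a, b, m) ξ)
      = (fun y => c * (y ^ a * ((S ε y)⁻¹) ^ b * (H ε y) ^ m)) := by
    funext y; simp [evalT, mul_assoc]
  rw [hfun]
  refine h1.congr_deriv ?_
  simp only [dT, evalT, List.map_cons, List.map_nil, List.sum_cons, List.sum_nil]
  cases a with
  | zero =>
    norm_num
    ring
  | succ k =>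
    simp only [Nat.succ_sub_one, if_neg (Nat.succ_ne_zero k)]
    push_cast
    simp only [Pi.mul_apply]
    ring

lemma hasDerivAt_sum (hε : 0 < ε) (hξ : ε < ξ) (L : List Term) :
    HasDerivAt (fun ξ => (L.map (fun u => evalT ε u ξ)).sum)
      (((L.flatMap dT).map (fun u => evalT ε u ξ)).sum) ξ := by
  induction L with
  | nil => simpa using hasDerivAt_const ξ (0 : ℝ)
  | cons t L ih =>
    have := (hasDerivAt_evalT hε hξ t).add ih
    simp only [List.flatMap_cons, List.map_cons, List.sum_cons, List.map_append, List.sum_append]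
    exact this

lemma rep (hε : 0 < ε) (n : ℕ) (j : ℕ) :
    ∃ L : List Term,
      (∀ t ∈ L, t.2.2.2 + t.2.2.1 = (n + j) + t.2.1) ∧
      ∀ ξ : ℝ, ε < ξ →
        iteratedDeriv j (fun ξ : ℝ => (H ε ξ) ^ n) ξ = (L.map (fun u => evalT ε u ξ)).sum := by
  induction j with
  | zero =>
    refine ⟨[(1, 0, 0, n)], ?_, ?_⟩
    · intro t ht; simp at ht; subst ht; simp
    · intro ξ hξ; simp [evalT]
  | succ j ih =>
    obtain ⟨L, hw, hL⟩ := ih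
    refine ⟨L.flatMap dT, ?_, ?_⟩
    · intro t ht
      rw [List.mem_flatMap] at ht
      obtain ⟨u, hu, htu⟩ := ht
      have := hw u hu
      obtain ⟨c, a, b, m⟩ := u
      simp only [dT, List.mem_cons, List.mem_singleton] at htu
      simp only at this
      rcases htu with h | h | h | h
      · subst h; by_cases ha : a = 0 <;> simp [ha] <;> omega
      · subst h; simp; omega
      · subst h; simp; omega
      · simp at h
    · intro ξ hξ
      rw [iteratedDeriv_succ]
      have hev : iteratedDeriv j (fun ξ : ℝ => (H ε ξ) ^ n) =ᶠ[nhds ξ]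
          (fun ξ => (L.map (fun u => evalT ε u ξ)).sum) := by
        filter_upwards [isOpen_Ioi.mem_nhds hξ] with x hx
        exact hL x hx
      rw [hev.deriv_eq]
      exact (hasDerivAt_sum hε hξ L).deriv

lemma term_bound (hε : 0 < ε) (hξ : 2 * ε ≤ ξ) (t : Term) (w : ℕ)
    (hw : t.2.2.2 + t.2.2.1 = w + t.2.1) :
    |evalT ε t ξ| ≤ (|t.1| * 2 ^ t.2.2.1 * ε ^ (2 * t.2.2.2)) * (ξ ^ w)⁻¹ := by
  obtain ⟨c, a, b, m⟩ := t
  simp only at hw ⊢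
  have hξ0 : 0 < ξ := by linarith
  have hεξ : ε < ξ := by linarith
  have hs0 : 0 < S ε ξ := hSpos hε hεξ
  have hs2 : (S ε ξ) ^ 2 = ξ ^ 2 - ε ^ 2 := hS2 hε hεξ
  -- S ≥ ξ/2
  have hSge : ξ / 2 ≤ S ε ξ := by nlinarith
  -- S ≤ ξ
  have hSle : S ε ξ ≤ ξ := by nlinarith
  -- |H| ≤ ε²/ξ
  have hHabs : |H ε ξ| ≤ ε ^ 2 / ξ := by
    have hH0 : H ε ξ ≤ 0 := sub_nonpos.2 hSle
    rw [abs_of_nonpos hH0, le_div_iff₀ hξ0]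
    unfold H
    nlinarith
  have hinv : (S ε ξ)⁻¹ ≤ 2 / ξ := by
    rw [inv_le_comm₀ hs0 (by positivity), inv_div]
    exact hSge
  have h1 : |evalT ε (c, a, b, m) ξ| = |c| * ξ ^ a * ((S ε ξ)⁻¹) ^ b * |H ε ξ| ^ m := by
    simp only [evalT]
    rw [abs_mul, abs_mul, abs_mul, abs_pow, abs_pow, abs_pow, abs_of_pos hξ0,
      abs_inv, abs_of_pos hs0]
  rw [h1]
  have h2 : |c| * ξ ^ a * ((S ε ξ)⁻¹) ^ b * |H ε ξ| ^ m ≤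
      |c| * ξ ^ a * (2 / ξ) ^ b * (ε ^ 2 / ξ) ^ m := by
    have t1 : ((S ε ξ)⁻¹) ^ b ≤ (2 / ξ) ^ b :=
      pow_le_pow_left₀ (inv_nonneg.2 hs0.le) hinv b
    have t2 : |H ε ξ| ^ m ≤ (ε ^ 2 / ξ) ^ m :=
      pow_le_pow_left₀ (abs_nonneg _) hHabs m
    have hx : (0:ℝ) ≤ |c| * ξ ^ a := by positivity
    exact mul_le_mul (mul_le_mul le_rfl t1 (by positivity) hx)
      t2 (by positivity) (by positivity)
  refine h2.trans (le_of_eq ?_)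
  have hne : ξ ≠ 0 := hξ0.ne'
  rw [div_pow, div_pow, pow_mul]
  field_simp
  rw [mul_assoc, mul_assoc, ← pow_add, ← pow_add, show b + m = w + a from by omega]
  ring

lemma abs_list_sum (l : List ℝ) : |l.sum| ≤ (l.map abs).sum := by
  induction l with
  | nil => simp
  | cons x l ih =>
    simp only [List.sum_cons, List.map_cons]
    exact (abs_add_le _ _).trans (add_le_add le_rfl ih)

end Stmt15

theorem stmt_15 (ε : ℝ) (hε : 0 < ε) :
    ∀ (n : ℕ), 1 ≤ n → ∀ (j : ℕ), ∃ C : ℝ,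
      ∀ ξ : ℝ, 2 * ε ≤ ξ →
        |iteratedDeriv j (fun ξ : ℝ => (Real.sqrt (ξ ^ 2 - ε ^ 2) - ξ) ^ n) ξ| ≤
          C * ξ ^ (-((n : ℝ) + (j : ℝ))) := by
  intro n hn j
  obtain ⟨L, hw, hL⟩ := Stmt15.rep hε n j
  refine ⟨(L.map (fun t => |t.1| * 2 ^ t.2.2.1 * ε ^ (2 * t.2.2.2))).sum, ?_⟩
  intro ξ hξ
  have hξ0 : 0 < ξ := by linarith
  have hεξ : ε < ξ := by linarith
  have hfun : (fun ξ : ℝ => (Real.sqrt (ξ ^ 2 - ε ^ 2) - ξ) ^ n)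
      = fun ξ : ℝ => (Stmt15.H ε ξ) ^ n := rfl
  rw [hfun, hL ξ hεξ]
  have hrpow : ξ ^ (-((n : ℝ) + (j : ℝ))) = (ξ ^ (n + j) : ℝ)⁻¹ := by
    rw [show -((n : ℝ) + (j : ℝ)) = -((n + j : ℕ) : ℝ) by push_cast; ring,
      Real.rpow_neg hξ0.le, Real.rpow_natCast]
  rw [hrpow]
  calc |(L.map (fun u => Stmt15.evalT ε u ξ)).sum|
      ≤ ((L.map (fun u => Stmt15.evalT ε u ξ)).map abs).sum := Stmt15.abs_list_sum _
    _ ≤ (L.map (fun t => (|t.1| * 2 ^ t.2.2.1 * ε ^ (2 * t.2.2.2)) * (ξ ^ (n + j))⁻¹)).sum := by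
        rw [List.map_map]
        apply List.sum_le_sum
        intro t ht
        exact Stmt15.term_bound hε hξ t (n + j) (hw t ht)
    _ = (L.map (fun t => |t.1| * 2 ^ t.2.2.1 * ε ^ (2 * t.2.2.2))).sum * (ξ ^ (n + j))⁻¹ := by
        rw [← List.sum_map_mul_right]
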